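/- Let G be a group and let z₀, z₁, z₂ be elements of G of infinite order such that each pairwise intersection ⟨z_i⟩ ∩ ⟨z_j⟩ (i ≠ j) has finite index in both ⟨z_i⟩ and ⟨z_j⟩. Then [⟨z₁⟩ : ⟨z₀⟩∩⟨z₁⟩] · [⟨z₂⟩ : ⟨z₁⟩∩⟨z₂⟩] · [⟨z₀⟩ : ⟨z₂⟩∩⟨z₀⟩] = [⟨z₀⟩ : ⟨z₀⟩∩⟨z₁⟩] · [⟨z₁⟩ : ⟨z₁⟩∩⟨z₂⟩] · [⟨z₂⟩ : ⟨z₂⟩∩⟨z₀⟩] as natural numbers. Equivalently, the modulus Δ̂(a,b) := [⟨b⟩ : ⟨a⟩∩⟨b⟩]/[⟨a⟩ : ⟨a⟩∩⟨b⟩] satisfies the cocycle identity Δ̂(z₀,z₁)·Δ̂(z₁,z₂) = Δ̂(z₀,z₂). -/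

import Mathlib

/-- The cocycle identity for the modulus `Δ̂` on pairwise commensurable infinite cyclic
subgroups: writing `r a b = [⟨b⟩ : ⟨a⟩ ∩ ⟨b⟩] = (zpowers a).relIndex (zpowers b)`, we have
`r z₀ z₁ * r z₁ z₂ * r z₂ z₀ = r z₁ z₀ * r z₂ z₁ * r z₀ z₂`, equivalently
`Δ̂(z₀,z₁) · Δ̂(z₁,z₂) = Δ̂(z₀,z₂)` in `ℚ` where `Δ̂(a,b) = r a b / r b a`. -/
theorem modulus_cocycle {G : Type*} [Group G] (z₀ z₁ z₂ : G)
    (h₀ : ¬ IsOfFinOrder z₀) (h₁ : ¬ IsOfFinOrder z₁) (h₂ : ¬ IsOfFinOrder z₂)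
    (h01 : (Subgroup.zpowers z₀).relIndex (Subgroup.zpowers z₁) ≠ 0)
    (h10 : (Subgroup.zpowers z₁).relIndex (Subgroup.zpowers z₀) ≠ 0)
    (h12 : (Subgroup.zpowers z₁).relIndex (Subgroup.zpowers z₂) ≠ 0)
    (h21 : (Subgroup.zpowers z₂).relIndex (Subgroup.zpowers z₁) ≠ 0)
    (h02 : (Subgroup.zpowers z₀).relIndex (Subgroup.zpowers z₂) ≠ 0)
    (h20 : (Subgroup.zpowers z₂).relIndex (Subgroup.zpowers z₀) ≠ 0) :
    (Subgroup.zpowers z₀).relIndex (Subgroup.zpowers z₁) *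
        (Subgroup.zpowers z₁).relIndex (Subgroup.zpowers z₂) *
        (Subgroup.zpowers z₂).relIndex (Subgroup.zpowers z₀) =
      (Subgroup.zpowers z₁).relIndex (Subgroup.zpowers z₀) *
        (Subgroup.zpowers z₂).relIndex (Subgroup.zpowers z₁) *
        (Subgroup.zpowers z₀).relIndex (Subgroup.zpowers z₂) ∧
    (((Subgroup.zpowers z₀).relIndex (Subgroup.zpowers z₁) : ℚ) /
          ((Subgroup.zpowers z₁).relIndex (Subgroup.zpowers z₀) : ℚ)) *
        (((Subgroup.zpowers z₁).relIndex (Subgroup.zpowers z₂) : ℚ) /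
          ((Subgroup.zpowers z₂).relIndex (Subgroup.zpowers z₁) : ℚ)) =
      ((Subgroup.zpowers z₀).relIndex (Subgroup.zpowers z₂) : ℚ) /
        ((Subgroup.zpowers z₂).relIndex (Subgroup.zpowers z₀) : ℚ) := by
  set A := Subgroup.zpowers z₀ with hA
  set B := Subgroup.zpowers z₁ with hB
  set C := Subgroup.zpowers z₂ with hC
  set H : Subgroup G := A ⊓ B ⊓ C with hH
  -- H has finite index in each of A, B, C
  have hsA : H.relIndex A ≠ 0 := by
    refine Subgroup.relIndex_inf_ne_zero
      (Subgroup.relIndex_inf_ne_zero (by simp [Subgroup.relIndex_self]) h10) h20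
  have hsB : H.relIndex B ≠ 0 := by
    refine Subgroup.relIndex_inf_ne_zero
      (Subgroup.relIndex_inf_ne_zero h01 (by simp [Subgroup.relIndex_self])) h21
  have hsC : H.relIndex C ≠ 0 := by
    refine Subgroup.relIndex_inf_ne_zero
      (Subgroup.relIndex_inf_ne_zero h02 h12) (by simp [Subgroup.relIndex_self])
  -- key multiplicativity
  have key : ∀ X Y : Subgroup G, H ≤ X ⊓ Y →
      H.relIndex (X ⊓ Y) * X.relIndex Y = H.relIndex Y := by
    intro X Y hle
    rw [← Subgroup.inf_relIndex_right X Y]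
    exact Subgroup.relIndex_mul_relIndex H (X ⊓ Y) Y hle inf_le_right
  have hAB : H ≤ A ⊓ B := inf_le_left
  have hBC : H ≤ B ⊓ C := le_inf (inf_le_left.trans inf_le_right) inf_le_right
  have hCA : H ≤ C ⊓ A := le_inf inf_le_right (inf_le_left.trans inf_le_left)
  have e01 := key A B hAB
  have e10 := key B A (by rwa [inf_comm])
  have e12 := key B C hBC
  have e21 := key C B (by rwa [inf_comm])
  have e20 := key C A hCA
  have e02 := key A C (by rwa [inf_comm])
  rw [inf_comm B A] at e10
  rw [inf_comm C B] at e21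
  rw [inf_comm A C] at e02
  set m01 := H.relIndex (A ⊓ B) with hm01
  set m12 := H.relIndex (B ⊓ C) with hm12
  set m20 := H.relIndex (C ⊓ A) with hm20
  have hm01ne : m01 ≠ 0 := fun h => hsB (by rw [← e01, h, zero_mul])
  have hm12ne : m12 ≠ 0 := fun h => hsC (by rw [← e12, h, zero_mul])
  have hm20ne : m20 ≠ 0 := fun h => hsA (by rw [← e20, h, zero_mul])
  have main : A.relIndex B * B.relIndex C * C.relIndex A =
      B.relIndex A * C.relIndex B * A.relIndex C := by
    have hmne : m01 * m12 * m20 ≠ 0 := by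
      simp [Nat.mul_ne_zero, hm01ne, hm12ne, hm20ne]
    apply Nat.eq_of_mul_eq_mul_right (Nat.pos_of_ne_zero hmne)
    calc A.relIndex B * B.relIndex C * C.relIndex A * (m01 * m12 * m20)
        = (m01 * A.relIndex B) * (m12 * B.relIndex C) * (m20 * C.relIndex A) := by ring
      _ = H.relIndex B * H.relIndex C * H.relIndex A := by rw [e01, e12, e20]
      _ = (m01 * B.relIndex A) * (m12 * C.relIndex B) * (m20 * A.relIndex C) := by
          rw [e10, e21, e02]; ring
      _ = B.relIndex A * C.relIndex B * A.relIndex C * (m01 * m12 * m20) := by ring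
  refine ⟨main, ?_⟩
  have hcast := congrArg (Nat.cast : ℕ → ℚ) main
  push_cast at hcast
  have q10 : ((B.relIndex A : ℚ)) ≠ 0 := Nat.cast_ne_zero.mpr h10
  have q21 : ((C.relIndex B : ℚ)) ≠ 0 := Nat.cast_ne_zero.mpr h21
  have q20 : ((C.relIndex A : ℚ)) ≠ 0 := Nat.cast_ne_zero.mpr h20
  field_simp
  linear_combination hcast
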